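/- Let G = ⟨α, τ : α^n = τ^2 = 1, τα = α^{-1}τ⟩ be the dihedral group of order 2n with n ≥ 3, let H ≤ ⟨α⟩ be a subgroup, and let U be an atom of B(G) with |U| > 1. Then the subsequence U_H of U consisting of the terms lying in H has length |U_H| ≤ 2|H| − 2. -/

import Mathlib

namespace ProductOne

open scoped Classical

variable {G : Type*} [Group G]

/-- `S` is a product-one sequence over `G`: its terms can be ordered with product `1`. -/
def IsProductOne (S : Multiset G) : Prop :=
  ∃ l : List G, (l : Multiset G) = S ∧ l.prod = 1

/-- `S` is an atom (a minimal product-one sequence): it is a nontrivial product-one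
sequence that is not the concatenation of two nontrivial product-one sequences. -/
def IsAtomSeq (S : Multiset G) : Prop :=
  S ≠ 0 ∧ IsProductOne S ∧
    ∀ A B : Multiset G, S = A + B → IsProductOne A → IsProductOne B → A = 0 ∨ B = 0

/-- `S` is a sequence over the subset `G₀ ⊆ G`. -/
def SeqOn (G₀ : Set G) (S : Multiset G) : Prop := ∀ g ∈ S, g ∈ G₀

/-- `S` is an atom of the monoid `B(G₀)` of product-one sequences over `G₀`. -/
def IsAtomSeqOn (G₀ : Set G) (S : Multiset G) : Prop := SeqOn G₀ S ∧ IsAtomSeq S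

/-- The set of lengths `L(A)` of factorizations of `A` into atoms over `G₀`. -/
def lengthsOn (G₀ : Set G) (A : Multiset G) : Set ℕ :=
  {k | ∃ f : Multiset (Multiset G), Multiset.card f = k ∧
        (∀ U ∈ f, IsAtomSeqOn G₀ U) ∧ f.sum = A}

/-- The set of lengths `L(A)` over the whole group. -/
def lengths (A : Multiset G) : Set ℕ := lengthsOn Set.univ A

/-- The set of distances of a set `L ⊆ ℕ`. -/
def distancesOf (L : Set ℕ) : Set ℕ :=
  {d | 0 < d ∧ ∃ a, a ∈ L ∧ a + d ∈ L ∧ ∀ b ∈ L, ¬(a < b ∧ b < a + d)}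

/-- The set of distances `Δ(G₀)` of the monoid `B(G₀)`. -/
def DeltaOn (G₀ : Set G) : Set ℕ :=
  {d | ∃ A : Multiset G, SeqOn G₀ A ∧ IsProductOne A ∧ d ∈ distancesOf (lengthsOn G₀ A)}

/-- The set of distances `Δ(G)` of `B(G)`. -/
def Delta (G : Type*) [Group G] : Set ℕ := DeltaOn (Set.univ : Set G)

/-- The large Davenport constant of `G₀`: maximal length of an atom of `B(G₀)`. -/
noncomputable def DavenportOn (G₀ : Set G) : ℕ :=
  sSup {k | ∃ S : Multiset G, IsAtomSeqOn G₀ S ∧ Multiset.card S = k}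

/-- The large Davenport constant `D(G)`. -/
noncomputable def Davenport (G : Type*) [Group G] : ℕ :=
  DavenportOn (Set.univ : Set G)

/-- The small Davenport constant `d(G₀)`: maximal length of a product-one free
sequence over `G₀`. -/
noncomputable def smallDavenportOn (G₀ : Set G) : ℕ :=
  sSup {k | ∃ S : Multiset G, SeqOn G₀ S ∧ Multiset.card S = k ∧
        ∀ T : Multiset G, T ≤ S → T ≠ 0 → ¬IsProductOne T}

/-- `Δ*(G) = {min Δ(G₀) : G₀ ⊆ G with Δ(G₀) ≠ ∅}`. -/
def DeltaStar (G : Type*) [Group G] : Set ℕ :=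
  {d | ∃ G₀ : Set G, (DeltaOn G₀).Nonempty ∧ d = sInf (DeltaOn G₀)}

/-- The elasticity `ρ(L) = max L / min L` of a set of lengths (with the set of
positive elements used, and `ρ = 1` if there are none). -/
noncomputable def elasticity (L : Set ℕ) : ℚ :=
  if (L ∩ {k | 0 < k}).Nonempty then
    ((sSup (L ∩ {k | 0 < k}) : ℕ) : ℚ) / ((sInf (L ∩ {k | 0 < k}) : ℕ) : ℚ)
  else 1

/-- The elasticity `ρ(G₀)` of the monoid `B(G₀)`. -/
noncomputable def rhoOn (G₀ : Set G) : ℝ :=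
  sSup {x : ℝ | ∃ A : Multiset G, SeqOn G₀ A ∧ IsProductOne A ∧
    x = (elasticity (lengthsOn G₀ A) : ℝ)}

/-- `Δ*_ρ(G) = {min Δ(G₀) : G₀ ⊆ G with ρ(G₀) = D(G)/2}`. -/
noncomputable def DeltaRhoStar (G : Type*) [Group G] : Set ℕ :=
  {d | ∃ G₀ : Set G, rhoOn G₀ = (Davenport G : ℝ) / 2 ∧ d = sInf (DeltaOn G₀)}

/-- Divisibility in the monoid `B(G)`. -/
def BDvd (A S : Multiset G) : Prop :=
  ∃ C : Multiset G, IsProductOne C ∧ S = A + C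

/-- The `ω`-invariant `ω(B(G), A)`. -/
noncomputable def omegaAt (A : Multiset G) : ℕ∞ :=
  sInf {N : ℕ∞ | ∀ f : Multiset (Multiset G),
    (∀ B ∈ f, IsProductOne B) → BDvd A f.sum →
    ∃ t ≤ f, (Multiset.card t : ℕ∞) ≤ N ∧ BDvd A t.sum}

/-- `ω(G) = sup {ω(B(G), U) : U an atom of B(G)}`. -/
noncomputable def omegaInv (G : Type*) [Group G] : ℕ∞ :=
  ⨆ U ∈ {U : Multiset G | IsAtomSeq U}, omegaAt U

/-- `z` is a factorization of `A` into atoms. -/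
def IsFactorization (A : Multiset G) (z : Multiset (Multiset G)) : Prop :=
  (∀ U ∈ z, IsAtomSeq U) ∧ z.sum = A

/-- The distance between two factorizations. -/
noncomputable def factDist (z z' : Multiset (Multiset G)) : ℕ :=
  letI := Classical.decEq (Multiset G)
  max (Multiset.card (z - z')) (Multiset.card (z' - z))

/-- The catenary degree `c(A)`. -/
noncomputable def catenaryAt (A : Multiset G) : ℕ∞ :=
  sInf {N : ℕ∞ | ∀ z z' : Multiset (Multiset G),
    IsFactorization A z → IsFactorization A z' →
    Relation.ReflTransGen
      (fun x y => IsFactorization A y ∧ (factDist x y : ℕ∞) ≤ N) z z'}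

/-- The set of positive catenary degrees `Ca(G)`. -/
noncomputable def CatenarySet (G : Type*) [Group G] : Set ℕ∞ :=
  {c | ∃ A : Multiset G, IsProductOne A ∧ catenaryAt A = c ∧ 0 < c}

/-- The catenary degree `c(G)` of `B(G)`. -/
noncomputable def catenaryDegree (G : Type*) [Group G] : ℕ∞ :=
  ⨆ A ∈ {A : Multiset G | IsProductOne A}, catenaryAt A

/-- The cross number `k(S)` of a sequence. -/
noncomputable def crossNumber (S : Multiset G) : ℚ :=
  (S.map fun g => (1 : ℚ) / (orderOf g : ℚ)).sum

/-- The system of sets of lengths `L(G)`. -/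
def LSystem (G : Type*) [Group G] : Set (Set ℕ) :=
  {L | ∃ A : Multiset G, IsProductOne A ∧ L = lengths A}

/-- The set of products `π(S)` of all orderings of the terms of `S`. -/
def piSet (S : Multiset G) : Set G :=
  {g | ∃ l : List G, (l : Multiset G) = S ∧ l.prod = g}

/-- The sumset `{x₁, -x₁} + ⋯ + {x_s, -x_s}` for a sequence `a = x₁ ⋯ x_s`. -/
def signedSums {α : Type*} [AddCommGroup α] (a : Multiset α) : Set α :=
  {z | ∃ t ≤ a, z = t.sum + t.sum - a.sum}

/-- `Σ_k(T)`: the set of sums of `k`-term subsequences of `T`. -/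
def subseqSums {α : Type*} [AddCommMonoid α] (k : ℕ) (T : Multiset α) : Set α :=
  {z | ∃ t ≤ T, Multiset.card t = k ∧ t.sum = z}

/-- The subsequence `S_X` of all terms of `S` lying in `X`. -/
noncomputable def restrictTo (X : Set G) (S : Multiset G) : Multiset G :=
  letI := Classical.decPred fun g => g ∈ X
  S.filter fun g => g ∈ X

/-- The maximum multiplicity `h(S)` of a term of `S`. -/
noncomputable def maxMultiplicity {α : Type*} (S : Multiset α) : ℕ :=
  letI := Classical.decEq α
  S.toFinset.sup S.count

end ProductOne


section DihedralAux

open DihedralGroup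
open scoped Classical

variable {n : ℕ}

/-- The exponent of a dihedral group element. -/
def DGexpo : DihedralGroup n → ZMod n
  | r i => i
  | sr i => i

/-- Whether a dihedral group element is a rotation. -/
def DGisRot : DihedralGroup n → Bool
  | r _ => true
  | sr _ => false

lemma DGisRot_true {x : DihedralGroup n} (h : DGisRot x = true) : ∃ a, x = r a := by
  cases x with
  | r a => exact ⟨a, rfl⟩
  | sr a => simp [DGisRot] at h

lemma DGisRot_false {x : DihedralGroup n} (h : DGisRot x = false) : ∃ a, x = sr a := by
  cases x with
  | r a => simp [DGisRot] at h
  | sr a => exact ⟨a, rfl⟩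

lemma DG_prod_map_r (t : List (ZMod n)) : (t.map r).prod = r t.sum := by
  induction t with
  | nil => simp
  | cons a t ih => simp [ih]

lemma DG_zpow_r_one (k : ℤ) : (r 1 : DihedralGroup n) ^ k = r (k : ZMod n) := by
  cases k with
  | ofNat k => simpa using r_one_pow (n := n) k
  | negSucc k =>
    have h1 : ∀ x : ZMod n, (r x)⁻¹ = r (-x) := fun x =>
      inv_eq_of_mul_eq_one_right (by rw [r_mul_r, add_neg_cancel, ← one_def])
    rw [zpow_negSucc, r_one_pow, h1]
    congr 1
    push_cast [Int.negSucc_eq]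
    ring

/-- Collect the exponents of the rotation terms of `l` lying in `E`, separated according
to the parity (rotation/reflection) of the product of the suffix after them. -/
noncomputable def DGhdata (E : Set (ZMod n)) :
    List (DihedralGroup n) → Multiset (ZMod n) × Multiset (ZMod n)
  | [] => (0, 0)
  | DihedralGroup.r e :: rest =>
      if e ∈ E then
        (if DGisRot rest.prod then (e ::ₘ (DGhdata E rest).1, (DGhdata E rest).2)
         else ((DGhdata E rest).1, e ::ₘ (DGhdata E rest).2))
      else DGhdata E rest
  | DihedralGroup.sr _ :: rest => DGhdata E rest

lemma DGhdata_mem (E : Set (ZMod n)) :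
    ∀ l : List (DihedralGroup n),
      (∀ e ∈ (DGhdata E l).1, e ∈ E) ∧ (∀ e ∈ (DGhdata E l).2, e ∈ E) := by
  intro l
  induction l with
  | nil => simp [DGhdata]
  | cons x rest ih =>
    cases x with
    | r e =>
      by_cases he : e ∈ E
      · by_cases hrot : DGisRot rest.prod
        · simp only [DGhdata, if_pos he, if_pos hrot]
          refine ⟨?_, ih.2⟩
          intro f hf
          rcases Multiset.mem_cons.1 hf with h | h
          · exact h ▸ he
          · exact ih.1 f h
        · simp only [DGhdata, if_pos he, if_neg hrot]
          refine ⟨ih.1, ?_⟩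
          intro f hf
          rcases Multiset.mem_cons.1 hf with h | h
          · exact h ▸ he
          · exact ih.2 f h
      · simpa only [DGhdata, if_neg he] using ih
    | sr a => simpa only [DGhdata] using ih

lemma DGhdata_filter (E : Set (ZMod n)) (X : Set (DihedralGroup n))
    (hX : ∀ e : ZMod n, (r e ∈ X ↔ e ∈ E)) (hX2 : ∀ e : ZMod n, sr e ∉ X) :
    ∀ l : List (DihedralGroup n),
      Multiset.map r ((DGhdata E l).1 + (DGhdata E l).2) =
        Multiset.filter (· ∈ X) (↑l : Multiset (DihedralGroup n)) := by
  intro l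
  induction l with
  | nil => simp [DGhdata]
  | cons x rest ih =>
    have hcoe : (↑(x :: rest) : Multiset (DihedralGroup n)) = x ::ₘ ↑rest := rfl
    cases x with
    | r e =>
      by_cases he : e ∈ E
      · have hmemX : r e ∈ X := (hX e).2 he
        rw [hcoe, Multiset.filter_cons_of_pos _ hmemX, ← ih]
        by_cases hrot : DGisRot rest.prod
        · simp only [DGhdata, if_pos he, if_pos hrot]
          rw [Multiset.cons_add, Multiset.map_cons]
        · simp only [DGhdata, if_pos he, if_neg hrot]
          rw [Multiset.add_cons, Multiset.map_cons]
      · have hmemX : r e ∉ X := fun h => he ((hX e).1 h)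
        rw [hcoe, Multiset.filter_cons_of_neg _ hmemX, ← ih]
        simp only [DGhdata, if_neg he]
    | sr a =>
      rw [hcoe, Multiset.filter_cons_of_neg _ (hX2 a), ← ih]
      simp only [DGhdata]

lemma DGdel_plus (E : Set (ZMod n)) :
    ∀ (l : List (DihedralGroup n)) (T : Multiset (ZMod n)), T ≤ (DGhdata E l).1 →
    ∃ l' : List (DihedralGroup n),
      (↑l' : Multiset (DihedralGroup n)) + T.map r = ↑l ∧
        l'.prod = l.prod * r (-T.sum) := by
  intro l
  induction l with
  | nil =>
    intro T hT
    simp only [DGhdata, Multiset.le_zero] at hT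
    subst hT
    exact ⟨[], by simp, by simp⟩
  | cons x rest ih =>
    intro T hT
    have hcoe : (↑(x :: rest) : Multiset (DihedralGroup n)) = x ::ₘ ↑rest := rfl
    cases x with
    | r e =>
      by_cases he : e ∈ E
      · by_cases hrot : DGisRot rest.prod
        · rw [show (DGhdata E (r e :: rest)).1 = e ::ₘ (DGhdata E rest).1 by
            simp only [DGhdata, if_pos he, if_pos hrot]] at hT
          by_cases heT : e ∈ T
          · have hT' : T.erase e ≤ (DGhdata E rest).1 := Multiset.erase_le_iff_le_cons.2 hT
            obtain ⟨l', h1, h2⟩ := ih (T.erase e) hT'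
            obtain ⟨a, ha⟩ := DGisRot_true hrot
            refine ⟨l', ?_, ?_⟩
            · rw [hcoe, ← Multiset.cons_erase heT, Multiset.map_cons, Multiset.add_cons, h1]
            · rw [h2, List.prod_cons, ha,
                show T.sum = e + (T.erase e).sum by
                  rw [← Multiset.sum_cons, Multiset.cons_erase heT]]
              simp only [r_mul_r]
              congr 1
              ring
          · have hT' : T ≤ (DGhdata E rest).1 := (Multiset.le_cons_of_notMem heT).1 hT
            obtain ⟨l', h1, h2⟩ := ih T hT'
            refine ⟨r e :: l', ?_, ?_⟩
            · rw [hcoe, show (↑(r e :: l') : Multiset (DihedralGroup n)) = r e ::ₘ ↑l' from rfl,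
                Multiset.cons_add, h1]
            · rw [List.prod_cons, List.prod_cons, h2, mul_assoc]
        · rw [show (DGhdata E (r e :: rest)).1 = (DGhdata E rest).1 by
            simp only [DGhdata, if_pos he, if_neg hrot]] at hT
          obtain ⟨l', h1, h2⟩ := ih T hT
          refine ⟨r e :: l', ?_, ?_⟩
          · rw [hcoe, show (↑(r e :: l') : Multiset (DihedralGroup n)) = r e ::ₘ ↑l' from rfl,
              Multiset.cons_add, h1]
          · rw [List.prod_cons, List.prod_cons, h2, mul_assoc]
      · rw [show (DGhdata E (r e :: rest)).1 = (DGhdata E rest).1 by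
          simp only [DGhdata, if_neg he]] at hT
        obtain ⟨l', h1, h2⟩ := ih T hT
        refine ⟨r e :: l', ?_, ?_⟩
        · rw [hcoe, show (↑(r e :: l') : Multiset (DihedralGroup n)) = r e ::ₘ ↑l' from rfl,
            Multiset.cons_add, h1]
        · rw [List.prod_cons, List.prod_cons, h2, mul_assoc]
    | sr a =>
      rw [show (DGhdata E (sr a :: rest)).1 = (DGhdata E rest).1 by
        simp only [DGhdata]] at hT
      obtain ⟨l', h1, h2⟩ := ih T hT
      refine ⟨sr a :: l', ?_, ?_⟩
      · rw [hcoe, show (↑(sr a :: l') : Multiset (DihedralGroup n)) = sr a ::ₘ ↑l' from rfl,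
          Multiset.cons_add, h1]
      · rw [List.prod_cons, List.prod_cons, h2, mul_assoc]

lemma DGdel_minus (E : Set (ZMod n)) :
    ∀ (l : List (DihedralGroup n)) (T : Multiset (ZMod n)), T ≤ (DGhdata E l).2 →
    ∃ l' : List (DihedralGroup n),
      (↑l' : Multiset (DihedralGroup n)) + T.map r = ↑l ∧
        l'.prod = l.prod * r (T.sum) := by
  intro l
  induction l with
  | nil =>
    intro T hT
    simp only [DGhdata, Multiset.le_zero] at hT
    subst hT
    exact ⟨[], by simp, by simp⟩
  | cons x rest ih =>
    intro T hT
    have hcoe : (↑(x :: rest) : Multiset (DihedralGroup n)) = x ::ₘ ↑rest := rfl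
    cases x with
    | r e =>
      by_cases he : e ∈ E
      · by_cases hrot : DGisRot rest.prod
        · rw [show (DGhdata E (r e :: rest)).2 = (DGhdata E rest).2 by
            simp only [DGhdata, if_pos he, if_pos hrot]] at hT
          obtain ⟨l', h1, h2⟩ := ih T hT
          refine ⟨r e :: l', ?_, ?_⟩
          · rw [hcoe, show (↑(r e :: l') : Multiset (DihedralGroup n)) = r e ::ₘ ↑l' from rfl,
              Multiset.cons_add, h1]
          · rw [List.prod_cons, List.prod_cons, h2, mul_assoc]
        · rw [show (DGhdata E (r e :: rest)).2 = e ::ₘ (DGhdata E rest).2 by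
            simp only [DGhdata, if_pos he, if_neg hrot]] at hT
          by_cases heT : e ∈ T
          · have hT' : T.erase e ≤ (DGhdata E rest).2 := Multiset.erase_le_iff_le_cons.2 hT
            obtain ⟨l', h1, h2⟩ := ih (T.erase e) hT'
            obtain ⟨a, ha⟩ := DGisRot_false (Bool.eq_false_iff.2 hrot)
            refine ⟨l', ?_, ?_⟩
            · rw [hcoe, ← Multiset.cons_erase heT, Multiset.map_cons, Multiset.add_cons, h1]
            · rw [h2, List.prod_cons, ha,
                show T.sum = e + (T.erase e).sum by
                  rw [← Multiset.sum_cons, Multiset.cons_erase heT]]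
              simp only [r_mul_sr, sr_mul_r]
              congr 1
              ring
          · have hT' : T ≤ (DGhdata E rest).2 := (Multiset.le_cons_of_notMem heT).1 hT
            obtain ⟨l', h1, h2⟩ := ih T hT'
            refine ⟨r e :: l', ?_, ?_⟩
            · rw [hcoe, show (↑(r e :: l') : Multiset (DihedralGroup n)) = r e ::ₘ ↑l' from rfl,
                Multiset.cons_add, h1]
            · rw [List.prod_cons, List.prod_cons, h2, mul_assoc]
      · rw [show (DGhdata E (r e :: rest)).2 = (DGhdata E rest).2 by
          simp only [DGhdata, if_neg he]] at hT
        obtain ⟨l', h1, h2⟩ := ih T hT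
        refine ⟨r e :: l', ?_, ?_⟩
        · rw [hcoe, show (↑(r e :: l') : Multiset (DihedralGroup n)) = r e ::ₘ ↑l' from rfl,
            Multiset.cons_add, h1]
        · rw [List.prod_cons, List.prod_cons, h2, mul_assoc]
    | sr a =>
      rw [show (DGhdata E (sr a :: rest)).2 = (DGhdata E rest).2 by
        simp only [DGhdata]] at hT
      obtain ⟨l', h1, h2⟩ := ih T hT
      refine ⟨sr a :: l', ?_, ?_⟩
      · rw [hcoe, show (↑(sr a :: l') : Multiset (DihedralGroup n)) = sr a ::ₘ ↑l' from rfl,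
          Multiset.cons_add, h1]
      · rw [List.prod_cons, List.prod_cons, h2, mul_assoc]

/-- Any multiset of at least `|A|` elements of a finite additive subgroup-like set `A`
has a nonempty zero-sum sub-multiset of size at most `|A|`. -/
lemma DG_exists_zero_sum {α : Type*} [AddCommGroup α] (A : Set α) (hfin : A.Finite)
    (h0 : (0 : α) ∈ A) (hadd : ∀ x ∈ A, ∀ y ∈ A, x + y ∈ A)
    (S : Multiset α) (hS : ∀ x ∈ S, x ∈ A) (hm : Nat.card A ≤ Multiset.card S) :
    ∃ T ≤ S, T ≠ 0 ∧ Multiset.card T ≤ Nat.card A ∧ T.sum = 0 := by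
  classical
  haveI : Fintype A := hfin.fintype
  set m := Nat.card A with hmdef
  have hcardA : Fintype.card A = m := by rw [hmdef, Nat.card_eq_fintype_card]
  set u := S.toList.take m with hu
  have hulen : u.length = m := by
    rw [hu, List.length_take, Multiset.length_toList]
    omega
  have humem : ∀ x ∈ u, x ∈ A := by
    intro x hx
    exact hS x (by rw [← Multiset.mem_toList]; exact List.take_subset m S.toList hx)
  have hsum_mem : ∀ t : List α, (∀ x ∈ t, x ∈ A) → t.sum ∈ A := by
    intro t
    induction t with
    | nil => intro _; simpa using h0
    | cons a t ih =>
      intro h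
      rw [List.sum_cons]
      exact hadd a (h a List.mem_cons_self) t.sum
        (ih fun x hx => h x (List.mem_cons_of_mem a hx))
  have hftake : ∀ k : ℕ, (u.take k).sum ∈ A := fun k =>
    hsum_mem _ fun x hx => humem x (List.take_subset k u hx)
  set f : Fin (m + 1) → A := fun k => ⟨(u.take (k : ℕ)).sum, hftake _⟩ with hfdef
  have key : ∀ i j : Fin (m + 1), (i : ℕ) < (j : ℕ) → f i = f j →
      ∃ T ≤ S, T ≠ 0 ∧ Multiset.card T ≤ m ∧ T.sum = 0 := by
    intro i j hlt hfeq
    set v := (u.drop (i : ℕ)).take ((j : ℕ) - (i : ℕ)) with hv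
    have hjm : (j : ℕ) ≤ m := by omega
    have hvlen : v.length = (j : ℕ) - (i : ℕ) := by
      rw [hv, List.length_take, List.length_drop, hulen]
      omega
    have hvsub : v.Sublist S.toList :=
      ((List.take_sublist _ _).trans (List.drop_sublist _ _)).trans (List.take_sublist _ _)
    have hsum : (u.take (j : ℕ)).sum = (u.take (i : ℕ)).sum + v.sum := by
      rw [show (j : ℕ) = (i : ℕ) + ((j : ℕ) - (i : ℕ)) by omega, List.take_add, List.sum_append]
    have heq : (u.take (i : ℕ)).sum = (u.take (j : ℕ)).sum := congrArg Subtype.val hfeq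
    refine ⟨(↑v : Multiset α), ?_, ?_, ?_, ?_⟩
    · rw [← Multiset.coe_toList S]
      exact Multiset.coe_le.2 hvsub.subperm
    · intro h
      have : v.length = 0 := by rw [Multiset.coe_eq_zero] at h; simp [h]
      omega
    · rw [Multiset.coe_card, hvlen]; omega
    · have hv0 : v.sum = 0 := by
        rw [← heq] at hsum
        exact (add_eq_left.1 hsum.symm)
      simpa using hv0
  obtain ⟨i, j, hij, hfeq⟩ := Fintype.exists_ne_map_eq_of_card_lt f (by simp [hcardA])
  have hne : (i : ℕ) ≠ (j : ℕ) := fun h => hij (Fin.ext h)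
  rcases hne.lt_or_gt with hlt | hlt
  · exact key i j hlt hfeq
  · exact key j i hlt hfeq.symm

end DihedralAux

open ProductOne DihedralGroup in
/-- Let `H ≤ ⟨α⟩` be a subgroup of the dihedral group `D_{2n}`
(`n ≥ 3`), and `U` an atom of `B(D_{2n})` with `|U| > 1`. Then `|U_H| ≤ 2|H| - 2`. -/
theorem card_restrict_to_subgroup_of_rotations (n : ℕ) (hn : 3 ≤ n)
    (H : Subgroup (DihedralGroup n)) (hH : H ≤ Subgroup.zpowers (DihedralGroup.r 1))
    (U : Multiset (DihedralGroup n)) (hU : IsAtomSeq U) (hcard : 1 < Multiset.card U) :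
    Multiset.card (restrictTo (H : Set (DihedralGroup n)) U) ≤ 2 * Nat.card H - 2 := by
  classical
  haveI : NeZero n := ⟨by omega⟩
  set m := Nat.card H with hm
  have hm1 : 1 ≤ m := Nat.one_le_iff_ne_zero.2 (Nat.card_pos (α := H)).ne'
  by_contra hcon
  push_neg at hcon
  obtain ⟨hne, ⟨l, hlU, hlprod⟩, hmin⟩ := hU
  set E : Set (ZMod n) := {e | r e ∈ H} with hE
  -- every element of H is a rotation
  have hHrot : ∀ x ∈ H, x = r (DGexpo x) := by
    intro x hx
    obtain ⟨k, hk⟩ := hH hx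
    have hk' : (r 1 : DihedralGroup n) ^ k = x := hk
    rw [← hk', DG_zpow_r_one]
    rfl
  have hsrnot : ∀ e : ZMod n, sr e ∉ (H : Set (DihedralGroup n)) := by
    intro e he
    have h1 : sr e = r (DGexpo (sr e)) := hHrot _ he
    exact absurd (congrArg DGisRot h1) (by simp [DGisRot])
  -- the exponent set E
  have hE0 : (0 : ZMod n) ∈ E := by
    show r 0 ∈ H
    rw [← one_def]; exact H.one_mem
  have hEadd : ∀ x ∈ E, ∀ y ∈ E, x + y ∈ E := by
    intro x hx y hy
    show r (x + y) ∈ H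
    rw [← r_mul_r]
    exact H.mul_mem hx hy
  have hEfin : E.Finite := Set.toFinite E
  have hEcard : Nat.card E = m := by
    rw [hm]
    refine Nat.card_congr ⟨fun x => ⟨r x.1, x.2⟩, fun y => ⟨DGexpo y.1, ?_⟩, ?_, ?_⟩
    · show r (DGexpo y.1) ∈ H
      rw [← hHrot y.1 y.2]
      exact y.2
    · intro x; rfl
    · intro y
      exact Subtype.ext (hHrot y.1 y.2).symm
  -- restrictTo is a filter
  have hfilter : restrictTo (H : Set (DihedralGroup n)) U
      = Multiset.filter (· ∈ (H : Set (DihedralGroup n))) U := by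
    unfold restrictTo
    exact Multiset.filter_congr fun x _ => Iff.rfl
  have hPM := DGhdata_filter E (H : Set (DihedralGroup n))
    (fun e => Iff.rfl) hsrnot l
  set P := (DGhdata E l).1 with hP
  set M := (DGhdata E l).2 with hM
  have hcardPM : Multiset.card P + Multiset.card M
      = Multiset.card (restrictTo (H : Set (DihedralGroup n)) U) := by
    have h := congrArg Multiset.card hPM
    rwa [Multiset.card_map, Multiset.card_add, hlU, ← hfilter] at h
  have hbig : 2 * m - 1 ≤ Multiset.card P + Multiset.card M := by
    rw [hcardPM]; omega
  have hUH_le : Multiset.card (restrictTo (H : Set (DihedralGroup n)) U)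
      ≤ Multiset.card U := by
    rw [hfilter]
    exact Multiset.card_le_card (Multiset.filter_le _ _)
  -- common final step, given a splitting
  have final : ∀ (T : Multiset (ZMod n)) (l' : List (DihedralGroup n)),
      T ≠ 0 → Multiset.card T ≤ m → T.sum = 0 →
      (↑l' : Multiset (DihedralGroup n)) + T.map r = ↑l →
      l'.prod = 1 → False := by
    intro T l' hT0 hTcard hTsum hsplit hl'prod
    have hprodT : IsProductOne (T.map r) := by
      refine ⟨T.toList.map r, ?_, ?_⟩
      · rw [← Multiset.map_coe, Multiset.coe_toList]
      · rw [DG_prod_map_r]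
        have hh : T.toList.sum = T.sum := Multiset.sum_toList T
        rw [hh, hTsum, ← one_def]
    have hprodl' : IsProductOne (↑l' : Multiset (DihedralGroup n)) := ⟨l', rfl, hl'prod⟩
    have hUsplit : U = (↑l' : Multiset (DihedralGroup n)) + T.map r := by
      rw [← hlU, hsplit]
    rcases hmin _ _ hUsplit hprodl' hprodT with h | h
    · rw [h, zero_add] at hUsplit
      have hcardU : Multiset.card U ≤ m := by
        rw [hUsplit, Multiset.card_map]; exact hTcard
      omega
    · exact hT0 (by simpa using h)
  -- pigeonhole between P and M
  have hcases : m ≤ Multiset.card P ∨ m ≤ Multiset.card M := by omega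
  rcases hcases with hP1 | hM1
  · obtain ⟨T, hTle, hT0, hTcard, hTsum⟩ := DG_exists_zero_sum E hEfin hE0 hEadd P
      ((DGhdata_mem E l).1) (by rw [hEcard]; exact hP1)
    obtain ⟨l', h1, h2⟩ := DGdel_plus E l T hTle
    refine final T l' hT0 (hEcard ▸ hTcard) hTsum h1 ?_
    rw [h2, hlprod, hTsum, neg_zero, one_mul, ← one_def]
  · obtain ⟨T, hTle, hT0, hTcard, hTsum⟩ := DG_exists_zero_sum E hEfin hE0 hEadd M
      ((DGhdata_mem E l).2) (by rw [hEcard]; exact hM1)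
    obtain ⟨l', h1, h2⟩ := DGdel_minus E l T hTle
    refine final T l' hT0 (hEcard ▸ hTcard) hTsum h1 ?_
    rw [h2, hlprod, hTsum, one_mul, ← one_def]
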